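/- arXiv:2307.08159 — 3 statements merged into one kernel-verified Lean document; each statement's English description precedes it below -/
import Mathlib

section
/- Suppose a query M on a finite universe X is not ε-LDP, i.e., there exists an output y with max_x Pr(y|x) > e^ε · min_x Pr(y|x), where min_x Pr(y|x) > 0 and max_x Pr(y|x) < 1. Then there exists a statement f: X → [0,1] and a prior distribution Q such that Q(f|y) > e^ε · Q(f); hence M cannot provide an ε-learning limit for all statements. -/
open Real Finset

/-- if a query is not ε-LDP at output y, then there is a statement f
and a prior Q whose posterior exceeds `e^ε` times the prior, so the query cannot
provide an ε-learning limit for all statements. -/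
theorem not_ldp_implies_no_learning_limit
    {X : Type*} [Fintype X] [Nonempty X]
    (hcard : 2 ≤ Fintype.card X)
    (Pr : X → ℝ)        -- likelihood x ↦ Pr(y|x) for the witnessing output y
    (ε : ℝ)
    (hPrmin : 0 < Finset.univ.inf' Finset.univ_nonempty Pr)
    (hPrmax : Finset.univ.sup' Finset.univ_nonempty Pr < 1)
    (hnotLDP : Real.exp ε * Finset.univ.inf' Finset.univ_nonempty Pr <
      Finset.univ.sup' Finset.univ_nonempty Pr) :
    ∃ (f : X → ℝ) (Q : X → ℝ),
      (∀ x, 0 ≤ f x ∧ f x ≤ 1) ∧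
      (∀ x, 0 ≤ Q x) ∧ (∑ x, Q x = 1) ∧
      0 < ∑ x, Pr x * Q x ∧
      Real.exp ε * (∑ x, f x * Q x) <
        (∑ x, Pr x * f x * Q x) / (∑ x, Pr x * Q x) := by
  classical
  set m := Finset.univ.inf' Finset.univ_nonempty Pr with hm
  set M := Finset.univ.sup' Finset.univ_nonempty Pr with hM
  obtain ⟨a, -, ha⟩ := Finset.exists_mem_eq_sup' Finset.univ_nonempty Pr
  obtain ⟨b₀, -, hb₀⟩ := Finset.exists_mem_eq_inf' Finset.univ_nonempty Pr
  obtain ⟨b, hab, hb⟩ : ∃ b, b ≠ a ∧ Pr b = m := by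
    by_cases h : b₀ = a
    · obtain ⟨cc, hcc⟩ := Fintype.exists_ne_of_one_lt_card (by omega) a
      refine ⟨cc, hcc, le_antisymm ?_ ?_⟩
      · have h1 : Pr cc ≤ M := Finset.le_sup' Pr (Finset.mem_univ cc)
        have h2 : m = M := by rw [hm, hM, hb₀, h, ha]
        linarith
      · exact Finset.inf'_le Pr (Finset.mem_univ cc)
    · exact ⟨b₀, h, hb₀.symm⟩
  have hma : Pr a = M := ha.symm
  have hmb : Pr b = m := hb
  have hmM : m ≤ M := by
    have h1 : Pr b ≤ M := Finset.le_sup' Pr (Finset.mem_univ b)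
    linarith [hmb]
  have hPra : 0 < Pr a := by
    have := Finset.inf'_le Pr (Finset.mem_univ a); linarith
  have hPrb : 0 < Pr b := by linarith [hmb]
  set c := Real.exp ε * (M - m) with hc
  set δ := M - Real.exp ε * m with hδ
  have hδpos : 0 < δ := by rw [hδ]; linarith
  have hcnn : 0 ≤ c := mul_nonneg (Real.exp_pos ε).le (by linarith)
  set t := δ / (2 * (c + δ)) with ht
  have hcd : 0 < c + δ := by linarith
  have ht0 : 0 < t := div_pos hδpos (by linarith)
  have ht1 : t < 1 := by
    rw [ht, div_lt_one (by linarith)]; linarith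
  have htc : t * c < δ := by
    rw [ht, div_mul_eq_mul_div, div_lt_iff₀ (by linarith)]
    nlinarith
  set Q : X → ℝ := fun x => if x = a then t else if x = b then 1 - t else 0 with hQ
  have key : ∀ g : X → ℝ, ∑ x, g x * Q x = g a * t + g b * (1 - t) := by
    intro g
    rw [← Finset.sum_subset (Finset.subset_univ ({a, b} : Finset X))]
    · rw [Finset.sum_pair (Ne.symm hab)]
      simp [hQ, hab, Ne.symm hab]
    · intro x _ hx
      simp only [Finset.mem_insert, Finset.mem_singleton, not_or] at hx
      simp [hQ, hx.1, hx.2]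
  have hPrsum : ∑ x, Pr x * Q x = Pr a * t + Pr b * (1 - t) := key Pr
  refine ⟨fun x => if x = a then 1 else 0, Q, ?_, ?_, ?_, ?_, ?_⟩
  · intro x; by_cases h : x = a <;> simp [h]
  · intro x; by_cases h : x = a
    · simp [hQ, h]; linarith
    · by_cases h2 : x = b <;> simp [hQ, h, h2, hab] <;> linarith
  · have := key (fun _ => 1)
    simp only [one_mul] at this
    rw [this]; ring
  · rw [hPrsum]; nlinarith
  · have hf1 : ∑ x, (if x = a then (1:ℝ) else 0) * Q x = t := by
      rw [key]; simp [hab]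
    have hf2 : ∑ x, Pr x * (if x = a then (1:ℝ) else 0) * Q x = Pr a * t := by
      have := key (fun x => Pr x * (if x = a then (1:ℝ) else 0))
      simp only at this
      rw [this]; simp [hab]
    rw [hf1, hf2, hPrsum, lt_div_iff₀ (by nlinarith)]
    have hD : Real.exp ε * (Pr a * t + Pr b * (1 - t)) < Pr a := by
      rw [hma, hmb]
      nlinarith [htc]
    calc Real.exp ε * t * (Pr a * t + Pr b * (1 - t))
        = t * (Real.exp ε * (Pr a * t + Pr b * (1 - t))) := by ring
      _ < t * Pr a := by exact (mul_lt_mul_iff_right₀ ht0).mpr hD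
      _ = Pr a * t := by ring
end

section
/- For any δ > 0, any output y of a query M on finite universe X with p_min = min_x Pr(y|x) > 0 and p_max = max_x Pr(y|x), there exists a statement f and a prior Q such that Q(f|y)/Q(f) ≥ p_max/p_min − δ. Concretely, taking f to be the indicator of an argmax of Pr(y|·), and Q supported on that argmax with mass p and on an argmin with mass 1−p where p ≤ δ p_min² / ((p_max − p_min)(p_max − δ p_min)) (assuming p_max > δ p_min and p_max > p_min), the inequality holds. -/
open Real Finset

/-- the upper bound `p_max / p_min` on knowledge gain is tight up to
any δ > 0: some statement f and prior Q achieve `Q(f|y)/Q(f) ≥ p_max/p_min − δ`. -/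
theorem knowledge_gain_bound_tight
    {X : Type*} [Fintype X] [Nonempty X]
    (Pr : X → ℝ)        -- likelihood x ↦ Pr(y|x) for the output y
    (δ : ℝ) (hδ : 0 < δ)
    (hPr : ∀ x, 0 < Pr x ∧ Pr x ≤ 1)
    (hδsmall : δ < (Finset.univ.sup' Finset.univ_nonempty Pr) /
      (Finset.univ.inf' Finset.univ_nonempty Pr)) :
    ∃ (f : X → ℝ) (Q : X → ℝ),
      (∀ x, 0 ≤ f x ∧ f x ≤ 1) ∧
      (∀ x, 0 ≤ Q x) ∧ (∑ x, Q x = 1) ∧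
      0 < ∑ x, Pr x * Q x ∧
      0 < ∑ x, f x * Q x ∧
      (Finset.univ.sup' Finset.univ_nonempty Pr) /
          (Finset.univ.inf' Finset.univ_nonempty Pr) - δ ≤
        ((∑ x, Pr x * f x * Q x) / (∑ x, Pr x * Q x)) / (∑ x, f x * Q x) := by
  classical
  set pmax := Finset.univ.sup' Finset.univ_nonempty Pr with hpmax
  set pmin := Finset.univ.inf' Finset.univ_nonempty Pr with hpmin
  have hminpos : 0 < pmin := by
    rw [hpmin, Finset.lt_inf'_iff]
    exact fun x _ => (hPr x).1
  have hle : pmin ≤ pmax := by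
    have x0 := Classical.arbitrary X
    exact le_trans (Finset.inf'_le Pr (Finset.mem_univ x0)) (Finset.le_sup' Pr (Finset.mem_univ x0))
  rcases eq_or_lt_of_le hle with heq | hlt
  · -- pmax = pmin case
    obtain ⟨x0⟩ := (inferInstance : Nonempty X)
    refine ⟨fun _ => 1, fun x => if x = x0 then 1 else 0, fun x => by norm_num,
      fun x => by positivity, by simp, ?_, ?_, ?_⟩
    · simpa using (hPr x0).1
    · simp
    · have : pmax / pmin = 1 := by rw [← heq, div_self hminpos.ne']
      rw [this]
      have h1 : (∑ x, Pr x * 1 * (if x = x0 then (1:ℝ) else 0)) = Pr x0 := by simp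
      have h2 : (∑ x, Pr x * (if x = x0 then (1:ℝ) else 0)) = Pr x0 := by simp
      have h3 : (∑ x : X, (1:ℝ) * (if x = x0 then (1:ℝ) else 0)) = 1 := by simp
      rw [h1, h2, h3, div_self (hPr x0).1.ne']
      linarith
  · -- pmax > pmin
    obtain ⟨xM, -, hxM⟩ := Finset.exists_mem_eq_sup' Finset.univ_nonempty Pr
    obtain ⟨xm, -, hxm⟩ := Finset.exists_mem_eq_inf' Finset.univ_nonempty Pr
    have hne : xm ≠ xM := by
      intro h
      apply lt_irrefl (Pr xM)
      calc Pr xM = pmin := by rw [hpmin, hxm, h]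
        _ < pmax := hlt
        _ = Pr xM := by rw [hpmax, hxM]
    set R := pmax / pmin - δ with hR
    have hRpos : 0 < R := by rw [hR]; linarith
    have hRlt : R < pmax / pmin := by rw [hR]; linarith
    have hmaxpos : 0 < pmax := lt_of_lt_of_le hminpos hle
    have hcnum : pmin < pmax / R := by
      rw [lt_div_iff₀ hRpos]
      calc pmin * R < pmin * (pmax / pmin) := by
            exact mul_lt_mul_of_pos_left hRlt hminpos
        _ = pmax := by field_simp
    set c := (pmax / R - pmin) / (pmax - pmin) with hc
    have hcpos : 0 < c := by
      apply div_pos <;> linarith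
    set p := min 1 c with hp
    have hp0 : 0 < p := lt_min one_pos hcpos
    have hp1 : p ≤ 1 := min_le_left _ _
    have hD : pmin + p * (pmax - pmin) ≤ pmax / R := by
      have hpc : p ≤ c := min_le_right _ _
      have : p * (pmax - pmin) ≤ c * (pmax - pmin) :=
        mul_le_mul_of_nonneg_right hpc (by linarith)
      have hceq : c * (pmax - pmin) = pmax / R - pmin := by
        rw [hc, div_mul_cancel₀]; linarith
      linarith [this, hceq.le]
    set Q : X → ℝ := fun x => (if x = xM then p else 0) + (if x = xm then 1 - p else 0) with hQ
    set f : X → ℝ := fun x => if x = xM then 1 else 0 with hf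
    have hsum1 : (∑ x, Pr x * f x * Q x) = pmax * p := by
      simp [hf, hQ, mul_add, mul_ite, ite_mul, Finset.sum_add_distrib,
        Finset.sum_ite_eq', hne, hne.symm, ← hxM, mul_comm]
      exact Or.inl hpmax.symm
    have hsum2 : (∑ x, Pr x * Q x) = pmin + p * (pmax - pmin) := by
      simp [hQ, mul_add, mul_ite, Finset.sum_add_distrib, Finset.sum_ite_eq',
        ← hxM, ← hxm]
      ring
    have hsum3 : (∑ x, f x * Q x) = p := by
      simp [hf, hQ, mul_add, mul_ite, ite_mul, Finset.sum_add_distrib,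
        Finset.sum_ite_eq', hne, hne.symm]
    have hQsum : (∑ x, Q x) = 1 := by
      simp [hQ, Finset.sum_add_distrib, Finset.sum_ite_eq']
    have hDpos : 0 < pmin + p * (pmax - pmin) := by nlinarith
    refine ⟨f, Q, ?_, ?_, hQsum, ?_, ?_, ?_⟩
    · intro x
      simp only [hf]
      split <;> norm_num
    · intro x
      simp only [hQ]
      have h1 : (0:ℝ) ≤ if x = xM then p else 0 := by split <;> linarith
      have h2 : (0:ℝ) ≤ if x = xm then 1 - p else 0 := by split <;> linarith
      linarith
    · rw [hsum2]; exact hDpos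
    · rw [hsum3]; exact hp0
    · rw [hsum1, hsum2, hsum3]
      have hkey : pmax * p / (pmin + p * (pmax - pmin)) / p
          = pmax / (pmin + p * (pmax - pmin)) := by
        field_simp
      rw [hkey]
      have : R * (pmin + p * (pmax - pmin)) ≤ pmax := by
        calc R * (pmin + p * (pmax - pmin)) ≤ R * (pmax / R) :=
              mul_le_mul_of_nonneg_left hD hRpos.le
          _ = pmax := by field_simp
      calc pmax / pmin - δ = R := hR.symm
        _ ≤ pmax / (pmin + p * (pmax - pmin)) := by
            rw [le_div_iff₀ hDpos]; linarith
end

section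
/- For a fully adaptive composition of queries M_1, ..., M_n with positive likelihoods, if at least two of the accepted queries (say the last two, with tight guarantees ε_{n-1}, ε_n) are privacy-loss compatible — i.e., there exist outputs y_{n-1}, y_n with L(y_{n-1}, y_n) < e^{ε_{n-1}+ε_n} — and the final realized privacy loss equals the budget, L(y_{≤n}) = e^{ε_g}, then Σ_{i=1}^n ε_i > ε_g, i.e., the efficiency K = (Σ_i ε_i)/ε_g exceeds 1. -/
open Real Finset

section Aux

variable {X : Type*} [Fintype X] [Nonempty X]

lemma aux_inf'_pos (f : X → ℝ) (hf : ∀ x, 0 < f x) :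
    0 < Finset.univ.inf' Finset.univ_nonempty f := by
  obtain ⟨x, _, hx⟩ := Finset.exists_mem_eq_inf' Finset.univ_nonempty f
  rw [hx]; exact hf x

lemma aux_sup'_pos (f : X → ℝ) (hf : ∀ x, 0 < f x) :
    0 < Finset.univ.sup' Finset.univ_nonempty f :=
  lt_of_lt_of_le (hf (Classical.arbitrary X))
    (Finset.le_sup' f (Finset.mem_univ _))

lemma aux_sup'_mul (f g : X → ℝ) (hf : ∀ x, 0 < f x) (hg : ∀ x, 0 < g x) :
    Finset.univ.sup' Finset.univ_nonempty (fun x => f x * g x) ≤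
      Finset.univ.sup' Finset.univ_nonempty f *
        Finset.univ.sup' Finset.univ_nonempty g := by
  apply Finset.sup'_le
  intro x _
  exact mul_le_mul (Finset.le_sup' f (Finset.mem_univ x))
    (Finset.le_sup' g (Finset.mem_univ x)) (hg x).le
    (aux_sup'_pos f hf).le

lemma aux_inf'_mul (f g : X → ℝ) (hf : ∀ x, 0 < f x) (hg : ∀ x, 0 < g x) :
    Finset.univ.inf' Finset.univ_nonempty f *
      Finset.univ.inf' Finset.univ_nonempty g ≤
      Finset.univ.inf' Finset.univ_nonempty (fun x => f x * g x) := by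
  apply Finset.le_inf'
  intro x _
  exact mul_le_mul (Finset.inf'_le f (Finset.mem_univ x))
    (Finset.inf'_le g (Finset.mem_univ x)) (aux_inf'_pos g hg).le (hf x).le

end Aux

/-- if the last two accepted queries of a Bayesian composition are
privacy-loss compactible and the realized privacy loss of the whole composition
equals the budget `e^{ε_g}`, then the sum of the individual DP guarantees
strictly exceeds `ε_g`, i.e. the efficiency `K > 1`.
The first `n` queries have likelihoods `P i` (for outputs `y_i`) and guarantees
`ε i`; the last two queries have likelihoods `Pa, Pb` and guarantees `εa, εb`. -/
theorem bayesian_composition_efficiency_gt_one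
    {X : Type*} [Fintype X] [Nonempty X] (n : ℕ)
    (P : Fin n → X → ℝ) (Pa Pb : X → ℝ)
    (ε : Fin n → ℝ) (εa εb εg : ℝ)
    (hpos : ∀ i x, 0 < P i x) (hpa : ∀ x, 0 < Pa x) (hpb : ∀ x, 0 < Pb x)
    (hLDP : ∀ i, Finset.univ.sup' Finset.univ_nonempty (P i) ≤
      Real.exp (ε i) * Finset.univ.inf' Finset.univ_nonempty (P i))
    (hLDPa : Finset.univ.sup' Finset.univ_nonempty Pa ≤
      Real.exp εa * Finset.univ.inf' Finset.univ_nonempty Pa)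
    (hLDPb : Finset.univ.sup' Finset.univ_nonempty Pb ≤
      Real.exp εb * Finset.univ.inf' Finset.univ_nonempty Pb)
    -- privacy-loss compactibility of the last two queries:
    (hcompact : (Finset.univ.sup' Finset.univ_nonempty (fun x => Pa x * Pb x)) /
      (Finset.univ.inf' Finset.univ_nonempty (fun x => Pa x * Pb x)) <
      Real.exp (εa + εb))
    -- the realized privacy loss of the whole composition equals the budget:
    (hfull : (Finset.univ.sup' Finset.univ_nonempty
        (fun x => (∏ i, P i x) * Pa x * Pb x)) /
      (Finset.univ.inf' Finset.univ_nonempty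
        (fun x => (∏ i, P i x) * Pa x * Pb x)) = Real.exp εg) :
    εg < (∑ i, ε i) + εa + εb := by
  set f : X → ℝ := fun x => ∏ i, P i x with hfdef
  set g : X → ℝ := fun x => Pa x * Pb x with hgdef
  have hfpos : ∀ x, 0 < f x := fun x => Finset.prod_pos fun i _ => hpos i x
  have hgpos : ∀ x, 0 < g x := fun x => mul_pos (hpa x) (hpb x)
  have hfg : (fun x => (∏ i, P i x) * Pa x * Pb x) = fun x => f x * g x := by
    funext x; simp [hfdef, hgdef, mul_assoc]
  -- ratio of f is at most exp (∑ ε)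
  have hIf := aux_inf'_pos f hfpos
  have hIg := aux_inf'_pos g hgpos
  have hIfg : 0 < Finset.univ.inf' Finset.univ_nonempty (fun x => f x * g x) :=
    aux_inf'_pos _ (fun x => mul_pos (hfpos x) (hgpos x))
  -- sup' f ≤ exp (∑ ε) * inf' f
  have hsupprod : Finset.univ.sup' Finset.univ_nonempty f ≤
      ∏ i, Finset.univ.sup' Finset.univ_nonempty (P i) := by
    apply Finset.sup'_le
    intro x _
    exact Finset.prod_le_prod (fun i _ => (hpos i x).le)
      (fun i _ => Finset.le_sup' (P i) (Finset.mem_univ x))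
  have hinfprod : (∏ i, Finset.univ.inf' Finset.univ_nonempty (P i)) ≤
      Finset.univ.inf' Finset.univ_nonempty f := by
    apply Finset.le_inf'
    intro x _
    exact Finset.prod_le_prod
      (fun i _ => (aux_inf'_pos (P i) (hpos i)).le)
      (fun i _ => Finset.inf'_le (P i) (Finset.mem_univ x))
  have hf_ratio : Finset.univ.sup' Finset.univ_nonempty f ≤
      Real.exp (∑ i, ε i) * Finset.univ.inf' Finset.univ_nonempty f := by
    calc Finset.univ.sup' Finset.univ_nonempty f
        ≤ ∏ i, Finset.univ.sup' Finset.univ_nonempty (P i) := hsupprod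
      _ ≤ ∏ i, Real.exp (ε i) * Finset.univ.inf' Finset.univ_nonempty (P i) := by
          apply Finset.prod_le_prod
          · exact fun i _ => (aux_sup'_pos (P i) (hpos i)).le
          · exact fun i _ => hLDP i
      _ = Real.exp (∑ i, ε i) * ∏ i, Finset.univ.inf' Finset.univ_nonempty (P i) := by
          rw [Finset.prod_mul_distrib, Real.exp_sum]
      _ ≤ Real.exp (∑ i, ε i) * Finset.univ.inf' Finset.univ_nonempty f := by
          apply mul_le_mul_of_nonneg_left hinfprod (Real.exp_nonneg _)
  -- g strict bound from hcompact
  have hg_ratio : Finset.univ.sup' Finset.univ_nonempty g <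
      Real.exp (εa + εb) * Finset.univ.inf' Finset.univ_nonempty g := by
    have := (div_lt_iff₀ hIg).mp hcompact
    linarith [this]
  -- main chain
  have hmain : Real.exp εg < Real.exp ((∑ i, ε i) + εa + εb) := by
    rw [← hfull, hfg, div_lt_iff₀ hIfg]
    calc Finset.univ.sup' Finset.univ_nonempty (fun x => f x * g x)
        ≤ Finset.univ.sup' Finset.univ_nonempty f *
            Finset.univ.sup' Finset.univ_nonempty g :=
          aux_sup'_mul f g hfpos hgpos
      _ < (Real.exp (∑ i, ε i) * Finset.univ.inf' Finset.univ_nonempty f) *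
            (Real.exp (εa + εb) * Finset.univ.inf' Finset.univ_nonempty g) := by
          apply mul_lt_mul' hf_ratio hg_ratio (aux_sup'_pos g hgpos).le
          positivity
      _ = Real.exp ((∑ i, ε i) + εa + εb) *
            (Finset.univ.inf' Finset.univ_nonempty f *
              Finset.univ.inf' Finset.univ_nonempty g) := by
          rw [Real.exp_add, Real.exp_add, Real.exp_add]; ring
      _ ≤ Real.exp ((∑ i, ε i) + εa + εb) *
            Finset.univ.inf' Finset.univ_nonempty (fun x => f x * g x) :=
          mul_le_mul_of_nonneg_left (aux_inf'_mul f g hfpos hgpos)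
            (Real.exp_nonneg _)
  exact Real.exp_lt_exp.mp hmain
end
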